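/- If J is an invertible affine game (there exists K with J + K = 0), then for all affine games G, H: G ≥ H if and only if G + J ≥ H + J. -/

import Mathlib

inductive AGame : Type
  | inf : AGame
  | binf : AGame
  | node : List AGame → List AGame → AGame

namespace AGame

/-- The affine games: option sets are nonempty (hereditarily). -/
inductive Valid : AGame → Prop
  | inf : Valid .inf
  | binf : Valid .binf
  | node : ∀ {L R : List AGame}, L ≠ [] → R ≠ [] →
      (∀ g ∈ L, Valid g) → (∀ g ∈ R, Valid g) → Valid (.node L R)

/-- Total version of the disjunctive sum (value on the undefined cases `∞ + ∞̄` is junk). -/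
def add' : AGame → AGame → AGame
  | .inf, _ => .inf
  | _, .inf => .inf
  | .binf, _ => .binf
  | _, .binf => .binf
  | .node L R, .node L' R' =>
      .node ((L.attach.map fun x => add' x.1 (.node L' R')) ++
             (L'.attach.map fun y => add' (.node L R) y.1))
            ((R.attach.map fun x => add' x.1 (.node L' R')) ++
             (R'.attach.map fun y => add' (.node L R) y.1))
termination_by G H => sizeOf G + sizeOf H
decreasing_by
  all_goals
    simp_wf
    first
      | (have := List.sizeOf_lt_of_mem x.2; simp_all; omega)
      | (have := List.sizeOf_lt_of_mem y.2; simp_all; omega)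

/-- The disjunctive sum, undefined (`none`) exactly when adding `∞` to `∞̄`. -/
def add : AGame → AGame → Option AGame
  | .inf, .binf => none
  | .binf, .inf => none
  | G, H => some (add' G H)

mutual
/-- `o^L(G) = L` : Left, playing first, wins `G`. -/
def lf : AGame → Bool
  | .inf => true
  | .binf => false
  | .node L _ => L.attach.any fun x => ls x.1
termination_by G => sizeOf G
decreasing_by
  simp_wf; have := List.sizeOf_lt_of_mem x.2; simp_all; omega
/-- `o^R(G) = L` : Left, playing second, wins `G`. -/
def ls : AGame → Bool
  | .inf => true
  | .binf => false
  | .node _ R => R.attach.all fun x => lf x.1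
termination_by G => sizeOf G
decreasing_by
  simp_wf; have := List.sizeOf_lt_of_mem x.2; simp_all; omega
end

/-- The combined outcome `(o^L(G), o^R(G))`, encoded as a pair of booleans
(`true` = Left wins). `(true,true)` is 𝓛, `(true,false)` is 𝓝, `(false,true)` is 𝓟,
`(false,false)` is 𝓡. -/
def outcome (G : AGame) : Bool × Bool := (lf G, ls G)

/-- The partial order of outcomes (componentwise, 𝓛 maximal, 𝓡 minimal, 𝓝 ∥ 𝓟). -/
def OutLE (a b : Bool × Bool) : Prop :=
  (a.1 = true → b.1 = true) ∧ (a.2 = true → b.2 = true)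

/-- `G ≥ H` : replacing `H` by `G` never hurts Left in any disjunctive sum. -/
def GE (G H : AGame) : Prop :=
  ∀ X : AGame, Valid X → X ≠ .inf → X ≠ .binf →
    OutLE (outcome (add' H X)) (outcome (add' G X))

/-- Game equivalence. -/
def Equiv (G H : AGame) : Prop :=
  ∀ X : AGame, Valid X → X ≠ .inf → X ≠ .binf →
    outcome (add' G X) = outcome (add' H X)

/-- The zero game `{∞̄ | ∞}`. -/
def zero : AGame := .node [.binf] [.inf]

/-- The conjugate (players switch roles). -/
def neg : AGame → AGame
  | .inf => .binf
  | .binf => .inf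
  | .node L R =>
      .node (R.attach.map fun x => neg x.1) (L.attach.map fun x => neg x.1)
termination_by G => sizeOf G
decreasing_by
  all_goals
    simp_wf
    (have := List.sizeOf_lt_of_mem x.2; simp_all; omega)


/-- Left option set (empty list for the terminating games). -/
def leftOptions : AGame → List AGame
  | .node L _ => L
  | _ => []

/-- Right option set (empty list for the terminating games). -/
def rightOptions : AGame → List AGame
  | .node _ R => R
  | _ => []

/-- A check: a game having `∞` as a Left option or `∞̄` as a Right option. -/
def IsCheck : AGame → Prop
  | .node L R => .inf ∈ L ∨ .binf ∈ R
  | _ => False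

/-- `Follower H G` : `H` is a follower of `G` (i.e. `G` itself, an option of `G`,
an option of an option, and so on). -/
inductive Follower : AGame → AGame → Prop
  | refl (G : AGame) : Follower G G
  | left {H K : AGame} {L R : List AGame} : K ∈ L → Follower H K → Follower H (.node L R)
  | right {H K : AGame} {L R : List AGame} : K ∈ R → Follower H K → Follower H (.node L R)

/-- A Conway form: distinct from `∞` and `∞̄`, with no checks among its followers. -/
def ConwayForm (G : AGame) : Prop :=
  G ≠ .inf ∧ G ≠ .binf ∧ ∀ H, Follower H G → ¬ IsCheck H

/-- A Conway game: a game equivalent to some Conway form. -/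
def ConwayGame (G : AGame) : Prop :=
  ∃ G', Valid G' ∧ ConwayForm G' ∧ Equiv G G'

/-- `J` is invertible: `J + K = 0` (in the sense of game equivalence) for some affine `K`. -/
def Invertible (J : AGame) : Prop :=
  ∃ K, Valid K ∧ ∃ S, add J K = some S ∧ Equiv S zero

/-- Number forms: the images of the surreal-number Conway forms under the embedding
that replaces an empty option set by `{∞̄}` on the Left and by `{∞}` on the Right.
Every genuine Left option is strictly less than every genuine Right option, and
all genuine options are again number forms. -/
inductive NumForm : AGame → Prop
  | mk {L R : List AGame}
      (hL0 : L ≠ []) (hR0 : R ≠ [])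
      (hLb : .binf ∈ L → L = [.binf]) (hRi : .inf ∈ R → R = [.inf])
      (hLnum : ∀ x ∈ L, x ≠ .binf → NumForm x)
      (hRnum : ∀ y ∈ R, y ≠ .inf → NumForm y)
      (hlt : ∀ x ∈ L, ∀ y ∈ R, x ≠ .binf → y ≠ .inf → GE y x ∧ ¬ GE x y) :
      NumForm (.node L R)

/-- A number: an affine game equal to (the image of) a Conway number form. -/
def IsNumber (G : AGame) : Prop := ∃ n, Valid n ∧ NumForm n ∧ Equiv G n

/-- The pathetic tiny `⧾∞ = {0 | {0 | ∞̄}}`. -/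
def tinyInf : AGame := .node [zero] [.node [zero] [.binf]]

/-- The pathetic miny `⧿∞ = {{∞ | 0} | 0}`. -/
def minyInf : AGame := .node [.node [.inf] [zero]] [zero]

end AGame

namespace AGame

theorem any_congr {l : List AGame} {f g : AGame → Bool} (h : ∀ x ∈ l, f x = g x) :
    l.any f = l.any g := by
  induction l with
  | nil => rfl
  | cons a t ih => simp_all

theorem all_congr {l : List AGame} {f g : AGame → Bool} (h : ∀ x ∈ l, f x = g x) :
    l.all f = l.all g := by
  induction l with
  | nil => rfl
  | cons a t ih => simp_all

theorem add'_inf_left (b : AGame) : add' .inf b = .inf := by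
  cases b <;> simp [add']

theorem add'_inf_right (a : AGame) : add' a .inf = .inf := by
  cases a <;> simp [add']

theorem add'_binf_left (b : AGame) (hb : b ≠ .inf) : add' .binf b = .binf := by
  cases b <;> simp [add'] at hb ⊢

theorem add'_binf_right (a : AGame) (ha : a ≠ .inf) : add' a .binf = .binf := by
  cases a <;> simp [add'] at ha ⊢

theorem add'_node_node (L R L' R' : List AGame) :
    add' (.node L R) (.node L' R') =
      .node (L.map (fun x => add' x (.node L' R')) ++ L'.map (fun y => add' (.node L R) y))
            (R.map (fun x => add' x (.node L' R')) ++ R'.map (fun y => add' (.node L R) y)) := by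
  rw [add']
  simp [List.attach_map_val]

theorem any_attach (L : List AGame) (f : AGame → Bool) :
    (L.attach.any fun x => f x.1) = L.any f := by
  rw [Bool.eq_iff_iff]
  simp [List.any_eq_true]

theorem all_attach (L : List AGame) (f : AGame → Bool) :
    (L.attach.all fun x => f x.1) = L.all f := by
  rw [Bool.eq_iff_iff]
  simp [List.all_eq_true]

theorem lf_node (L R : List AGame) : lf (.node L R) = L.any ls := by
  rw [lf, any_attach]

theorem ls_node (L R : List AGame) : ls (.node L R) = R.all lf := by
  rw [ls, all_attach]

theorem add'_assoc (a b c : AGame) : add' (add' a b) c = add' a (add' b c) := by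
  cases a with
  | inf => simp [add'_inf_left]
  | binf =>
    cases b with
    | inf => simp [add'_inf_left, add'_inf_right]
    | binf =>
      cases c with
      | inf => simp [add'_inf_right, add'_binf_left]
      | binf => simp [add'_binf_left, add'_binf_right]
      | node L R => simp [add'_binf_left]
    | node L' R' =>
      cases c with
      | inf => simp [add'_inf_right, add'_binf_left]
      | binf => simp [add'_binf_left, add'_binf_right]
      | node L'' R'' => simp [add'_binf_left, add'_node_node]
  | node L R =>
    cases b with
    | inf => simp [add'_inf_left, add'_inf_right]
    | binf =>
      cases c with
      | inf => simp [add'_inf_right, add'_binf_left, add'_binf_right]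
      | binf => simp [add'_binf_left, add'_binf_right]
      | node L'' R'' => simp [add'_binf_left, add'_binf_right, add'_node_node]
    | node L' R' =>
      cases c with
      | inf => simp [add'_inf_right]
      | binf => simp [add'_binf_right, add'_node_node]
      | node L'' R'' =>
        have hab := add'_node_node L R L' R'
        have hbc := add'_node_node L' R' L'' R''
        rw [hab, hbc, add'_node_node, add'_node_node, ← hab, ← hbc]
        simp only [List.map_append, List.map_map, List.append_assoc, Function.comp_def]
        have e1 :
            List.map (fun t => add' (add' t (.node L' R')) (.node L'' R'')) L =
            List.map (fun t => add' t (add' (.node L' R') (.node L'' R''))) L :=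
          List.map_congr_left fun t ht => add'_assoc t (.node L' R') (.node L'' R'')
        have e2 :
            List.map (fun t => add' (add' (.node L R) t) (.node L'' R'')) L' =
            List.map (fun t => add' (.node L R) (add' t (.node L'' R''))) L' :=
          List.map_congr_left fun t ht => add'_assoc (.node L R) t (.node L'' R'')
        have e3 :
            List.map (fun t => add' (add' (.node L R) (.node L' R')) t) L'' =
            List.map (fun t => add' (.node L R) (add' (.node L' R') t)) L'' :=
          List.map_congr_left fun t ht => add'_assoc (.node L R) (.node L' R') t
        have e4 :
            List.map (fun t => add' (add' t (.node L' R')) (.node L'' R'')) R =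
            List.map (fun t => add' t (add' (.node L' R') (.node L'' R''))) R :=
          List.map_congr_left fun t ht => add'_assoc t (.node L' R') (.node L'' R'')
        have e5 :
            List.map (fun t => add' (add' (.node L R) t) (.node L'' R'')) R' =
            List.map (fun t => add' (.node L R) (add' t (.node L'' R''))) R' :=
          List.map_congr_left fun t ht => add'_assoc (.node L R) t (.node L'' R'')
        have e6 :
            List.map (fun t => add' (add' (.node L R) (.node L' R')) t) R'' =
            List.map (fun t => add' (.node L R) (add' (.node L' R') t)) R'' :=
          List.map_congr_left fun t ht => add'_assoc (.node L R) (.node L' R') t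
        rw [e1, e2, e3, e4, e5, e6]
termination_by sizeOf a + sizeOf b + sizeOf c
decreasing_by
  all_goals
    simp_wf
    (have := List.sizeOf_lt_of_mem ht; simp_all; omega)

theorem lf_inf : lf .inf = true := by simp [lf]
theorem lf_binf : lf .binf = false := by simp [lf]
theorem ls_inf : ls .inf = true := by simp [ls]
theorem ls_binf : ls .binf = false := by simp [ls]

theorem out_comm (a b : AGame) :
    lf (add' a b) = lf (add' b a) ∧ ls (add' a b) = ls (add' b a) := by
  cases a with
  | inf => cases b <;> simp [add'_inf_left, add'_inf_right]
  | binf =>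
    cases b with
    | inf => simp [add'_inf_left, add'_inf_right]
    | binf => simp
    | node L' R' => simp [add'_binf_left, add'_binf_right]
  | node L R =>
    cases b with
    | inf => simp [add'_inf_left, add'_inf_right]
    | binf => simp [add'_binf_left, add'_binf_right]
    | node L' R' =>
      rw [add'_node_node, add'_node_node, lf_node, lf_node, ls_node, ls_node]
      simp only [List.any_append, List.all_append, List.any_map, List.all_map,
        Function.comp_def]
      have h1 : L.any (fun t => ls (add' t (.node L' R'))) =
          L.any (fun t => ls (add' (.node L' R') t)) :=
        any_congr fun t ht => (out_comm t (.node L' R')).2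
      have h2 : L'.any (fun t => ls (add' (.node L R) t)) =
          L'.any (fun t => ls (add' t (.node L R))) :=
        any_congr fun t ht => ((out_comm (.node L R) t).2)
      have h3 : R.all (fun t => lf (add' t (.node L' R'))) =
          R.all (fun t => lf (add' (.node L' R') t)) :=
        all_congr fun t ht => (out_comm t (.node L' R')).1
      have h4 : R'.all (fun t => lf (add' (.node L R) t)) =
          R'.all (fun t => lf (add' t (.node L R))) :=
        all_congr fun t ht => ((out_comm (.node L R) t).1)
      rw [h1, h2, h3, h4, Bool.or_comm, Bool.and_comm]
      exact ⟨rfl, rfl⟩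
termination_by sizeOf a + sizeOf b
decreasing_by
  all_goals
    simp_wf
    (have := List.sizeOf_lt_of_mem ht; simp_all; omega)

theorem zero_ne_inf : zero ≠ .inf := by simp [zero]

theorem zero_add_out (W : AGame) :
    lf (add' zero W) = lf W ∧ ls (add' zero W) = ls W := by
  cases W with
  | inf => simp [add'_inf_right]
  | binf => simp [add'_binf_right _ zero_ne_inf]
  | node L R =>
    have h : add' zero (.node L R) =
        .node ([add' .binf (.node L R)] ++ L.map (fun y => add' zero y))
              ([add' .inf (.node L R)] ++ R.map (fun y => add' zero y)) := by
      rw [zero, add'_node_node]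
      rfl
    rw [h, lf_node, ls_node, lf_node, ls_node]
    rw [add'_binf_left _ (by simp), add'_inf_left]
    simp only [List.any_append, List.all_append, List.any_map, List.all_map,
      List.any_cons, List.all_cons, List.any_nil, List.all_nil, Function.comp_def,
      ls_binf, lf_inf, Bool.false_or, Bool.true_and, Bool.or_false, Bool.and_true]
    have h1 : L.any (fun t => ls (add' zero t)) = L.any ls :=
      any_congr fun t ht => (zero_add_out t).2
    have h2 : R.all (fun t => lf (add' zero t)) = R.all lf :=
      all_congr fun t ht => (zero_add_out t).1
    rw [h1, h2]
    exact ⟨rfl, rfl⟩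
termination_by sizeOf W
decreasing_by
  all_goals
    simp_wf
    (have := List.sizeOf_lt_of_mem ht; simp_all; omega)

theorem add'_valid (a b : AGame) (ha : Valid a) (hb : Valid b) :
    Valid (add' a b) := by
  cases a with
  | inf => rw [add'_inf_left]; exact .inf
  | binf =>
    cases b with
    | inf => rw [add'_inf_right]; exact .inf
    | binf => rw [add'_binf_left _ (by simp)]; exact .binf
    | node L' R' => rw [add'_binf_left _ (by simp)]; exact .binf
  | node L R =>
    cases b with
    | inf => rw [add'_inf_right]; exact .inf
    | binf => rw [add'_binf_right _ (by simp)]; exact .binf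
    | node L' R' =>
      rw [add'_node_node]
      cases ha with | node hL0 hR0 hLv hRv =>
      cases hb with | node hL0' hR0' hLv' hRv' =>
      refine Valid.node (by simp [hL0]) (by simp [hR0]) ?_ ?_ <;>
      · intro g hg
        rcases List.mem_append.1 hg with h | h <;>
          obtain ⟨t, ht, rfl⟩ := List.mem_map.1 h
        · exact add'_valid _ _ (by solve_by_elim) (.node hL0' hR0' hLv' hRv')
        · exact add'_valid _ _ (.node hL0 hR0 hLv hRv) (by solve_by_elim)
termination_by sizeOf a + sizeOf b
decreasing_by
  all_goals
    simp_wf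
    (have := List.sizeOf_lt_of_mem ht; simp_all; omega)

theorem outcome_comm (a b : AGame) : outcome (add' a b) = outcome (add' b a) := by
  unfold outcome; rw [(out_comm a b).1, (out_comm a b).2]

theorem outcome_zero_add (W : AGame) : outcome (add' zero W) = outcome W := by
  unfold outcome; rw [(zero_add_out W).1, (zero_add_out W).2]

theorem valid_zero : Valid zero :=
  .node (by simp) (by simp) (by rintro g hg; simp at hg; subst hg; exact .binf)
    (by rintro g hg; simp at hg; subst hg; exact .inf)

theorem zero_ne_binf : zero ≠ .binf := by simp [zero]

theorem lf_zero : lf zero = false := by rw [zero, lf_node]; simp [ls_binf]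
theorem ls_zero : ls zero = true := by rw [zero, ls_node]; simp [lf_inf]

theorem not_equiv_inf_zero : ¬ Equiv .inf zero := by
  intro h
  have := h zero valid_zero zero_ne_inf zero_ne_binf
  rw [add'_inf_left] at this
  have h1 := (zero_add_out zero).1
  simp [outcome, Prod.ext_iff, lf_inf, h1, lf_zero, ls_inf] at this

theorem not_equiv_binf_zero : ¬ Equiv .binf zero := by
  intro h
  have := h zero valid_zero zero_ne_inf zero_ne_binf
  rw [add'_binf_left _ zero_ne_inf] at this
  have h2 := (zero_add_out zero).2
  simp [outcome, Prod.ext_iff, ls_binf, h2, ls_zero] at this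

theorem add'_node_ne_inf (L R L' R' : List AGame) :
    add' (.node L R) (.node L' R') ≠ .inf := by
  rw [add'_node_node]; simp

theorem add'_node_ne_binf (L R L' R' : List AGame) :
    add' (.node L R) (.node L' R') ≠ .binf := by
  rw [add'_node_node]; simp

theorem exists_node (a : AGame) (h1 : a ≠ .inf) (h2 : a ≠ .binf) :
    ∃ L R, a = .node L R := by
  cases a
  · exact absurd rfl h1
  · exact absurd rfl h2
  · exact ⟨_, _, rfl⟩

theorem equiv_zero_node {S : AGame} (h : Equiv S zero) : ∃ L R, S = .node L R := by
  cases S with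
  | inf => exact absurd h not_equiv_inf_zero
  | binf => exact absurd h not_equiv_binf_zero
  | node L R => exact ⟨_, _, rfl⟩

/-- If `J` is invertible then `G ≥ H ↔ G + J ≥ H + J`. -/
theorem ge_add_invertible_iff (G H J : AGame) (hG : Valid G) (hH : Valid H)
    (hJ : Valid J) (hinv : Invertible J) :
    GE G H ↔ GE (add' G J) (add' H J) := by
  obtain ⟨K, hKval, S, hS, hequiv⟩ := hinv
  obtain ⟨LS, RS, hSn⟩ := equiv_zero_node hequiv
  obtain ⟨LJ, RJ, LK, RK, hJn, hKn, hSeq⟩ :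
      ∃ LJ RJ LK RK, J = .node LJ RJ ∧ K = .node LK RK ∧ S = add' J K := by
    cases J <;> cases K <;>
      simp only [add, reduceCtorEq, Option.some.injEq] at hS <;> subst hS <;>
      first
      | (rw [add'_inf_left] at hSn; exact absurd hSn (by simp))
      | (rw [add'_inf_right] at hSn; exact absurd hSn (by simp))
      | (rw [add'_binf_left _ (by simp)] at hSn; exact absurd hSn (by simp))
      | (rw [add'_binf_right _ (by simp)] at hSn; exact absurd hSn (by simp))
      | exact ⟨_, _, _, _, rfl, rfl, rfl⟩
  constructor
  · intro hGH X hXv hX1 hX2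
    obtain ⟨LX, RX, hXn⟩ := exists_node X hX1 hX2
    rw [add'_assoc, add'_assoc]
    exact hGH (add' J X) (add'_valid _ _ hJ hXv)
      (by rw [hJn, hXn]; exact add'_node_ne_inf _ _ _ _)
      (by rw [hJn, hXn]; exact add'_node_ne_binf _ _ _ _)
  · intro h X hXv hX1 hX2
    obtain ⟨LX, RX, hXn⟩ := exists_node X hX1 hX2
    have key := h (add' K X) (add'_valid _ _ hKval hXv)
      (by rw [hKn, hXn]; exact add'_node_ne_inf _ _ _ _)
      (by rw [hKn, hXn]; exact add'_node_ne_binf _ _ _ _)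
    have hre : ∀ Y, Valid Y →
        outcome (add' Y (add' S X)) = outcome (add' Y X) := by
      intro Y hYv
      cases Y with
      | inf => rw [add'_inf_left, add'_inf_left]
      | binf =>
        rw [add'_binf_left _ (by rw [hSn, hXn]; exact add'_node_ne_inf _ _ _ _),
          add'_binf_left _ (by rw [hXn]; simp)]
      | node LY RY =>
        have hXYv : Valid (add' X (.node LY RY)) := add'_valid _ _ hXv hYv
        have hXY1 : add' X (.node LY RY) ≠ .inf := by
          rw [hXn]; exact add'_node_ne_inf _ _ _ _
        have hXY2 : add' X (.node LY RY) ≠ .binf := by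
          rw [hXn]; exact add'_node_ne_binf _ _ _ _
        calc outcome (add' (.node LY RY) (add' S X))
            = outcome (add' (add' S X) (.node LY RY)) := outcome_comm _ _
          _ = outcome (add' S (add' X (.node LY RY))) := by rw [add'_assoc]
          _ = outcome (add' zero (add' X (.node LY RY))) :=
              hequiv _ hXYv hXY1 hXY2
          _ = outcome (add' X (.node LY RY)) := outcome_zero_add _
          _ = outcome (add' (.node LY RY) X) := outcome_comm _ _
    have e1 : outcome (add' (add' H J) (add' K X)) = outcome (add' H X) := by
      rw [add'_assoc, ← add'_assoc J K X, ← hSeq, hre H hH]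
    have e2 : outcome (add' (add' G J) (add' K X)) = outcome (add' G X) := by
      rw [add'_assoc, ← add'_assoc J K X, ← hSeq, hre G hG]
    rw [e1, e2] at key
    exact key

end AGame
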